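/- arXiv:2605.30445 — 2 statements merged into one kernel-verified Lean document; each statement's English description precedes it below -/
import Mathlib

section
/- Let C be a nonconstant rational map with C(𝕋) ⊆ 𝕋 (i.e., C ∈ QFBP). If C^{-1}(𝕋) = 𝕋, then C is a finite Blaschke product or 1/C is a finite Blaschke product. -/
/-! Rational maps on the Riemann sphere `ℂ̂ = OnePoint ℂ`, quotients of finite
Blaschke products, and finite Blaschke products. -/

open Complex Metric Set OnePoint

/-- `r : ℂ̂ → ℂ̂` is a rational map: it is continuous and agrees with `p/q`
(for some polynomials `p, q` with `q ≠ 0`) away from the zeros of `q`. -/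
def IsRationalMap (r : OnePoint ℂ → OnePoint ℂ) : Prop :=
  Continuous r ∧ ∃ p q : Polynomial ℂ, q ≠ 0 ∧
    ∀ z : ℂ, q.eval z ≠ 0 → r (z : OnePoint ℂ) = ((p.eval z / q.eval z : ℂ) : OnePoint ℂ)

/-- The unit circle `𝕋`, viewed as a subset of the Riemann sphere. -/
def circleHat : Set (OnePoint ℂ) :=
  (fun z : ℂ => (z : OnePoint ℂ)) '' (sphere (0:ℂ) 1)

/-- `B` is a finite Blaschke product of degree `d ≥ 1`: on the closed unit disk it is
given by `B z = λ · ∏ i (z - a i)/(1 - conj (a i) · z)` with `|λ| = 1` and all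
`a i` in the open unit disk. -/
def IsBlaschke (d : ℕ) (B : ℂ → ℂ) : Prop :=
  1 ≤ d ∧ ∃ (l : ℂ) (a : Fin d → ℂ), ‖l‖ = 1 ∧ (∀ i, ‖a i‖ < 1) ∧
    ∀ z : ℂ, ‖z‖ ≤ 1 →
      B z = l * ∏ i, (z - a i) / (1 - (starRingEnd ℂ) (a i) * z)

/-- The rational map `C : ℂ̂ → ℂ̂` "is" the finite Blaschke product `B` of degree `d`:
it agrees with `B` on the closed unit disk (which determines a rational map). -/
def IsBlaschkeHat (d : ℕ) (C : OnePoint ℂ → OnePoint ℂ) : Prop :=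
  ∃ B : ℂ → ℂ, IsBlaschke d B ∧
    ∀ z : ℂ, ‖z‖ ≤ 1 → C (z : OnePoint ℂ) = ((B z : ℂ) : OnePoint ℂ)

/-- The rational map `C : ℂ̂ → ℂ̂` is the reciprocal `1/B` of the finite Blaschke
product `B` of degree `d`: on the closed unit disk, `C z = ∞` at zeros of `B` and
`C z = (B z)⁻¹` elsewhere. -/
def IsInvBlaschkeHat (d : ℕ) (C : OnePoint ℂ → OnePoint ℂ) : Prop :=
  ∃ B : ℂ → ℂ, IsBlaschke d B ∧
    ∀ z : ℂ, ‖z‖ ≤ 1 →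
      (B z = 0 → C (z : OnePoint ℂ) = ∞) ∧
      (B z ≠ 0 → C (z : OnePoint ℂ) = (((B z)⁻¹ : ℂ) : OnePoint ℂ))


open Polynomial Filter Topology Bornology


lemma nebot_within_compl_finite {F : Set ℂ} (hF : F.Finite) (z : ℂ) : (𝓝[Fᶜ] z).NeBot := by
  have h1 : ((F \ {z})ᶜ : Set ℂ) ∈ 𝓝 z :=
    ((hF.subset diff_subset).isClosed.isOpen_compl).mem_nhds (by simp)
  have h2 : 𝓝[({z}ᶜ : Set ℂ)] z = 𝓝[{z}ᶜ ∩ (F \ {z})ᶜ] z :=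
    (nhdsWithin_inter_of_mem' (mem_nhdsWithin_of_mem_nhds h1)).symm
  have h3 : ({z}ᶜ ∩ (F \ {z})ᶜ : Set ℂ) ⊆ Fᶜ := by
    intro x hx hxF
    exact hx.2 ⟨hxF, hx.1⟩
  have h4 : (𝓝[({z}ᶜ ∩ (F \ {z})ᶜ : Set ℂ)] z).NeBot := h2 ▸ (by infer_instance)
  exact h4.mono (nhdsWithin_mono _ h3)

lemma sphere_infinite : (Metric.sphere (0:ℂ) 1).Infinite := by
  refine Set.infinite_of_injective_forall_mem
    (f := fun n : ℕ => Complex.exp ((1 / (n + 1) : ℝ) * Complex.I)) ?_ ?_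
  · intro m n hmn
    rw [Complex.exp_eq_exp_iff_exists_int] at hmn
    obtain ⟨k, hk⟩ := hmn
    have hI : ((1 / (m + 1) : ℝ) : ℂ) = ((1 / (n + 1) : ℝ) : ℂ) + k * (2 * Real.pi) := by
      have hk' : (((1 / (m + 1) : ℝ) : ℂ)) * Complex.I
          = (((1 / (n + 1) : ℝ) : ℂ) + k * (2 * Real.pi)) * Complex.I := by
        push_cast at hk ⊢; linear_combination hk
      exact mul_right_cancel₀ Complex.I_ne_zero hk'
    have hR : (1 / (m + 1) : ℝ) = (1 / (n + 1) : ℝ) + k * (2 * Real.pi) := by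
      exact_mod_cast hI
    have hm0 : (0:ℝ) < 1 / (m + 1) := by positivity
    have hm1 : (1 / (m + 1) : ℝ) ≤ 1 := by
      rw [div_le_one (by positivity)]; linarith [Nat.cast_nonneg (α := ℝ) m]
    have hn0 : (0:ℝ) < 1 / (n + 1) := by positivity
    have hn1 : (1 / (n + 1) : ℝ) ≤ 1 := by
      rw [div_le_one (by positivity)]; linarith [Nat.cast_nonneg (α := ℝ) n]
    have hpi : (6:ℝ) < 2 * Real.pi := by
      have := Real.pi_gt_three; linarith
    have hk0 : k = 0 := by
      rcases lt_trichotomy (k:ℝ) 0 with h | h | h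
      · have : (k:ℝ) ≤ -1 := by exact_mod_cast Int.le_of_lt_add_one (by exact_mod_cast h)
        nlinarith
      · exact_mod_cast h
      · have : (1:ℝ) ≤ (k:ℝ) := by
          have : (0:ℤ) < k := by exact_mod_cast h
          exact_mod_cast this
        nlinarith
    rw [hk0] at hR; push_cast at hR
    field_simp at hR
    exact_mod_cast (show (m:ℝ) = n by linarith)
  · intro n
    simp only [mem_sphere_iff_norm, sub_zero, Complex.norm_exp]
    norm_num


lemma ratmap_repr {r : OnePoint ℂ → OnePoint ℂ} (hC : IsRationalMap r) :
    ∃ p q : Polynomial ℂ, IsCoprime p q ∧ q ≠ 0 ∧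
      (∀ z : ℂ, q.eval z ≠ 0 → r z = ((p.eval z / q.eval z : ℂ) : OnePoint ℂ)) ∧
      (∀ z : ℂ, q.eval z = 0 → r z = ∞) := by
  obtain ⟨hcont, p, q, hq, hpq⟩ := hC
  set g := GCDMonoid.gcd p q with hg
  have hg0 : g ≠ 0 := gcd_ne_zero_of_right hq
  set p₁ := p / g with hp₁
  set q₁ := q / g with hq₁
  have hq₁0 : q₁ ≠ 0 := right_div_gcd_ne_zero hq
  have hcop : IsCoprime p₁ q₁ := isCoprime_div_gcd_div_gcd hq
  have hpe : g * p₁ = p := EuclideanDomain.mul_div_cancel' hg0 (gcd_dvd_left p q)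
  have hqe : g * q₁ = q := EuclideanDomain.mul_div_cancel' hg0 (gcd_dvd_right p q)
  -- the cofinite "good" set
  set S : Set ℂ := {w | g.eval w ≠ 0 ∧ q₁.eval w ≠ 0} with hS
  have hSc : Sᶜ ⊆ {x | g.IsRoot x} ∪ {x | q₁.IsRoot x} := by
    intro x hx
    by_contra hh
    simp only [mem_union, mem_setOf_eq, IsRoot.def, not_or] at hh
    exact hx ⟨hh.1, hh.2⟩
  have hfin : (Sᶜ : Set ℂ).Finite :=
    ((finite_setOf_isRoot hg0).union (finite_setOf_isRoot hq₁0)).subset hSc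
  have hne : ∀ z : ℂ, (𝓝[S] z).NeBot := by
    intro z
    have := nebot_within_compl_finite hfin z
    rwa [compl_compl] at this
  have hSmem : ∀ w ∈ S, r w = ((p₁.eval w / q₁.eval w : ℂ) : OnePoint ℂ) := by
    intro w hw
    have hqw : q.eval w ≠ 0 := by
      rw [← hqe, eval_mul]
      exact mul_ne_zero hw.1 hw.2
    rw [hpq w hqw, ← hpe, ← hqe, eval_mul, eval_mul,
      mul_div_mul_left _ _ hw.1]
  have htrC : ∀ z : ℂ, Tendsto (fun w : ℂ => r w) (𝓝[S] z) (𝓝 (r z)) := fun z =>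
    ((hcont.comp OnePoint.continuous_coe).tendsto z).mono_left nhdsWithin_le_nhds
  have hev : ∀ z : ℂ, (fun w : ℂ => r w) =ᶠ[𝓝[S] z]
      (fun w => ((p₁.eval w / q₁.eval w : ℂ) : OnePoint ℂ)) := fun z =>
    eventually_nhdsWithin_of_forall hSmem
  refine ⟨p₁, q₁, hcop, hq₁0, ?_, ?_⟩
  · intro z hz
    have h3 : Tendsto (fun w : ℂ => ((p₁.eval w / q₁.eval w : ℂ) : OnePoint ℂ)) (𝓝[S] z)
        (𝓝 ((p₁.eval z / q₁.eval z : ℂ) : OnePoint ℂ)) := by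
      apply (OnePoint.continuous_coe.tendsto _).comp
      exact (((p₁.continuous_aeval.tendsto z).div (q₁.continuous_aeval.tendsto z) hz)).mono_left
        nhdsWithin_le_nhds
    have := hne z
    exact tendsto_nhds_unique ((htrC z).congr' (hev z)) h3
  · intro z hz
    have hpz : p₁.eval z ≠ 0 := by
      obtain ⟨u, v, huv⟩ := hcop
      intro h0
      have := congrArg (Polynomial.eval z) huv
      simp [h0, hz] at this
    have hnorm : Tendsto (fun w : ℂ => ‖p₁.eval w / q₁.eval w‖) (𝓝[S] z) atTop := by
      have h1 : Tendsto (fun w : ℂ => ‖p₁.eval w‖) (𝓝[S] z) (𝓝 ‖p₁.eval z‖) :=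
        (((p₁.continuous_aeval.tendsto z).norm)).mono_left nhdsWithin_le_nhds
      have h2 : Tendsto (fun w : ℂ => ‖q₁.eval w‖) (𝓝[S] z) (𝓝[>] 0) := by
        rw [tendsto_nhdsWithin_iff]
        constructor
        · have := ((q₁.continuous_aeval.tendsto z).norm).mono_left
            (nhdsWithin_le_nhds (s := S))
          simpa [hz] using this
        · exact eventually_nhdsWithin_of_forall (fun w hw => by
            simp [norm_pos_iff, hw.2])
      have h3 : Tendsto (fun w : ℂ => ‖q₁.eval w‖⁻¹) (𝓝[S] z) atTop :=
        h2.inv_tendsto_nhdsGT_zero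
      have := Filter.Tendsto.pos_mul_atTop (norm_pos_iff.mpr hpz) h1 h3
      simpa [div_eq_mul_inv] using this
    have h4 : Tendsto (fun w : ℂ => ((p₁.eval w / q₁.eval w : ℂ) : OnePoint ℂ)) (𝓝[S] z)
        (𝓝 (∞ : OnePoint ℂ)) := by
      apply OnePoint.tendsto_coe_infty.comp
      apply Filter.Tendsto.mono_right _ Filter.cocompact_le_coclosedCompact
      rw [← cobounded_eq_cocompact]
      exact tendsto_norm_atTop_iff_cobounded.mp hnorm
    have := hne z
    exact tendsto_nhds_unique ((htrC z).congr' (hev z)) h4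


noncomputable def dag (n : ℕ) (p : Polynomial ℂ) : Polynomial ℂ :=
  Polynomial.C ((starRingEnd ℂ) p.leadingCoeff) * X ^ (n - p.natDegree) *
    (p.roots.map (fun a => 1 - Polynomial.C ((starRingEnd ℂ) a) * X)).prod

lemma prod_factored (p : Polynomial ℂ) :
    p = Polynomial.C p.leadingCoeff * (p.roots.map (fun a => X - Polynomial.C a)).prod :=
  (IsAlgClosed.splits p).eq_prod_roots

lemma card_roots_eq (p : Polynomial ℂ) : Multiset.card p.roots = p.natDegree :=
  splits_iff_card_roots.mp (IsAlgClosed.splits p)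

lemma eval_factored (p : Polynomial ℂ) (z : ℂ) :
    p.eval z = p.leadingCoeff * (p.roots.map (fun a => z - a)).prod := by
  conv_lhs => rw [prod_factored p]
  rw [eval_mul, eval_C, eval_multiset_prod, Multiset.map_map]
  refine congrArg _ (congrArg (Multiset.prod (M := ℂ)) (Multiset.map_congr rfl ?_))
  intro a _
  simp

lemma eval_dag (n : ℕ) (p : Polynomial ℂ) (z : ℂ) :
    (dag n p).eval z = (starRingEnd ℂ) p.leadingCoeff * z ^ (n - p.natDegree) *
      (p.roots.map (fun a => 1 - (starRingEnd ℂ) a * z)).prod := by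
  rw [dag, eval_mul, eval_mul, eval_C, eval_pow, eval_X, eval_multiset_prod, Multiset.map_map]
  refine congrArg _ (congrArg (Multiset.prod (M := ℂ)) (Multiset.map_congr rfl ?_))
  intro a _
  simp

lemma factor_ne_zero (a : ℂ) : (1 - Polynomial.C ((starRingEnd ℂ) a) * X : Polynomial ℂ) ≠ 0 := by
  intro h
  have := congrArg (Polynomial.eval 0) h
  simp at this

lemma dag_ne_zero {p : Polynomial ℂ} (hp : p ≠ 0) {n : ℕ} : dag n p ≠ 0 := by
  unfold dag
  apply mul_ne_zero (mul_ne_zero _ (pow_ne_zero _ X_ne_zero))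
  · apply Multiset.prod_ne_zero
    intro h0
    obtain ⟨a, _, ha⟩ := Multiset.mem_map.mp h0
    exact factor_ne_zero a ha
  · simpa using (fun h => hp (leadingCoeff_eq_zero.mp h))

lemma natDegree_factor_le (a : ℂ) :
    (1 - Polynomial.C ((starRingEnd ℂ) a) * X : Polynomial ℂ).natDegree ≤ 1 := by
  refine le_trans (natDegree_sub_le _ _) ?_
  simp [natDegree_C_mul_le]
  exact natDegree_C_mul_le _ _ |>.trans (by simp)

lemma dag_natDegree_le {p : Polynomial ℂ} (hp : p ≠ 0) {n : ℕ} (hn : p.natDegree ≤ n) :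
    (dag n p).natDegree ≤ n := by
  unfold dag
  refine le_trans (natDegree_mul_le) ?_
  have h1 : (Polynomial.C ((starRingEnd ℂ) p.leadingCoeff) * X ^ (n - p.natDegree) :
      Polynomial ℂ).natDegree ≤ n - p.natDegree := by
    refine le_trans natDegree_mul_le ?_
    simp [natDegree_X_pow]
  have h2 : ((p.roots.map (fun a => 1 - Polynomial.C ((starRingEnd ℂ) a) * X)).prod).natDegree
      ≤ p.natDegree := by
    refine le_trans (natDegree_multiset_prod_le _) ?_
    rw [Multiset.map_map]
    calc (p.roots.map (natDegree ∘ fun a => 1 - Polynomial.C ((starRingEnd ℂ) a) * X)).sum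
        ≤ (p.roots.map (fun _ => 1)).sum :=
          Multiset.sum_map_le_sum_map _ _ (fun a _ => natDegree_factor_le a)
      _ = p.natDegree := by
          rw [Multiset.map_const', Multiset.sum_replicate, card_roots_eq]; simp
  omega

lemma dag_natDegree_eq {p : Polynomial ℂ} (hp : p ≠ 0) {n : ℕ} (hn : p.natDegree ≤ n)
    (h0 : (0 : ℂ) ∉ p.roots) : (dag n p).natDegree = n := by
  unfold dag
  have hlc : (starRingEnd ℂ) p.leadingCoeff ≠ 0 := by
    simpa using (fun h => hp (leadingCoeff_eq_zero.mp h))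
  have hfac : ∀ a ∈ p.roots, (1 - Polynomial.C ((starRingEnd ℂ) a) * X :
      Polynomial ℂ).natDegree = 1 := by
    intro a ha
    have ha0 : a ≠ 0 := fun h => h0 (h ▸ ha)
    have : (1 - Polynomial.C ((starRingEnd ℂ) a) * X : Polynomial ℂ)
        = -(Polynomial.C ((starRingEnd ℂ) a) * X - Polynomial.C 1) := by rw [map_one]; ring
    rw [this, natDegree_neg, natDegree_sub_C, natDegree_C_mul_X _ (by simpa using ha0)]
  have hprodne : (0 : Polynomial ℂ) ∉ p.roots.map (fun a => 1 - Polynomial.C ((starRingEnd ℂ) a) * X) := by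
    intro h0'
    obtain ⟨a, _, ha⟩ := Multiset.mem_map.mp h0'
    exact factor_ne_zero a ha
  rw [natDegree_mul (mul_ne_zero (by simpa using hlc) (pow_ne_zero _ X_ne_zero))
    (Multiset.prod_ne_zero hprodne),
    natDegree_mul (by simpa using hlc) (pow_ne_zero _ X_ne_zero),
    natDegree_C, natDegree_X_pow, natDegree_multiset_prod _ hprodne, Multiset.map_map]
  have : (p.roots.map (natDegree ∘ fun a => 1 - Polynomial.C ((starRingEnd ℂ) a) * X)).sum
      = (p.roots.map (fun _ => 1)).sum := by
    apply congrArg Multiset.sum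
    refine Multiset.map_congr rfl ?_
    intro a ha
    exact hfac a ha
  rw [this, Multiset.map_const', Multiset.sum_replicate, card_roots_eq]
  simp; omega

lemma eval_dag_sphere {p : Polynomial ℂ} (hp : p ≠ 0) {n : ℕ} (hn : p.natDegree ≤ n)
    {z : ℂ} (hz : ‖z‖ = 1) :
    (dag n p).eval z = z ^ n * (starRingEnd ℂ) (p.eval z) := by
  have hzz : z * (starRingEnd ℂ) z = 1 := by
    rw [Complex.mul_conj]
    norm_cast
    rw [Complex.normSq_eq_norm_sq, hz]; norm_num
  rw [eval_dag, eval_factored, map_mul]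
  have hconjprod : (starRingEnd ℂ) ((p.roots.map (fun a => z - a)).prod)
      = ((p.roots.map (fun a => (starRingEnd ℂ) z - (starRingEnd ℂ) a)).prod) := by
    rw [map_multiset_prod, Multiset.map_map]
    refine congrArg (Multiset.prod (M := ℂ)) (Multiset.map_congr rfl ?_)
    intro a _
    simp
  rw [hconjprod]
  have hm : Multiset.card p.roots = p.natDegree := card_roots_eq p
  have key : z ^ p.natDegree * ((p.roots.map (fun a => (starRingEnd ℂ) z - (starRingEnd ℂ) a)).prod)
      = (p.roots.map (fun a => 1 - (starRingEnd ℂ) a * z)).prod := by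
    rw [← hm]
    rw [← Multiset.prod_replicate, ← Multiset.map_const' p.roots z, ← Multiset.prod_map_mul]
    refine congrArg (Multiset.prod (M := ℂ)) (Multiset.map_congr rfl ?_)
    intro a _
    have : z * ((starRingEnd ℂ) z - (starRingEnd ℂ) a) = z * (starRingEnd ℂ) z - (starRingEnd ℂ) a * z := by ring
    rw [this, hzz]
  calc (starRingEnd ℂ) p.leadingCoeff * z ^ (n - p.natDegree) *
      (p.roots.map (fun a => 1 - (starRingEnd ℂ) a * z)).prod
      = (starRingEnd ℂ) p.leadingCoeff * z ^ (n - p.natDegree) *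
        (z ^ p.natDegree * ((p.roots.map (fun a => (starRingEnd ℂ) z - (starRingEnd ℂ) a)).prod)) := by rw [key]
    _ = z ^ (n - p.natDegree) * z ^ p.natDegree *
        ((starRingEnd ℂ) p.leadingCoeff * (p.roots.map (fun a => (starRingEnd ℂ) z - (starRingEnd ℂ) a)).prod) := by ring
    _ = z ^ n * ((starRingEnd ℂ) p.leadingCoeff * (p.roots.map (fun a => (starRingEnd ℂ) z - (starRingEnd ℂ) a)).prod) := by
        rw [← pow_add]; congr 2; omega

lemma dag_identity {p q : Polynomial ℂ} (hp : p ≠ 0) (hq : q ≠ 0) {n : ℕ}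
    (hpn : p.natDegree ≤ n) (hqn : q.natDegree ≤ n)
    (h : ∀ z : ℂ, ‖z‖ = 1 → ‖p.eval z / q.eval z‖ = 1) :
    p * dag n p = q * dag n q := by
  apply Polynomial.eq_of_infinite_eval_eq
  apply sphere_infinite.mono
  intro z hz
  have hz1 : ‖z‖ = 1 := by
    simpa [Complex.dist_eq] using (mem_sphere_iff_norm.mp hz)
  have habs := h z hz1
  have hqz : q.eval z ≠ 0 := by
    intro h0
    rw [h0] at habs
    simp at habs
  have heq : ‖p.eval z‖ = ‖q.eval z‖ := by
    rw [norm_div, div_eq_one_iff_eq (by simpa using hqz)] at habs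
    exact habs
  have hnsq : p.eval z * (starRingEnd ℂ) (p.eval z) = q.eval z * (starRingEnd ℂ) (q.eval z) := by
    rw [Complex.mul_conj, Complex.mul_conj, Complex.normSq_eq_norm_sq, Complex.normSq_eq_norm_sq, heq]
  simp only [mem_setOf_eq, eval_mul]
  rw [eval_dag_sphere hp hpn hz1, eval_dag_sphere hq hqn hz1]
  calc p.eval z * (z ^ n * (starRingEnd ℂ) (p.eval z))
      = z ^ n * (p.eval z * (starRingEnd ℂ) (p.eval z)) := by ring
    _ = z ^ n * (q.eval z * (starRingEnd ℂ) (q.eval z)) := by rw [hnsq]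
    _ = q.eval z * (z ^ n * (starRingEnd ℂ) (q.eval z)) := by ring

lemma multiset_to_fin (s : Multiset ℂ) (d : ℕ) (h : Multiset.card s = d) :
    ∃ a : Fin d → ℂ, (∀ i, a i ∈ s) ∧ ∀ g : ℂ → ℂ, (s.map g).prod = ∏ i, g (a i) := by
  have hlen : s.toList.length = d := by rw [Multiset.length_toList, h]
  refine ⟨fun i => s.toList.get (Fin.cast hlen.symm i), ?_, ?_⟩
  · intro i
    rw [← Multiset.mem_toList]
    exact List.get_mem _ _
  · intro g
    conv_lhs => rw [← Multiset.coe_toList s]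
    rw [Multiset.map_coe, Multiset.prod_coe]
    conv_lhs => rw [← List.ofFn_get s.toList, List.map_ofFn, List.prod_ofFn]
    exact (Fin.prod_congr' (g ∘ s.toList.get) hlen.symm).symm

lemma blaschke_side {p q : Polynomial ℂ} {n : ℕ} (hp : p ≠ 0) (hq : q ≠ 0)
    (hn : n = max p.natDegree q.natDegree)
    (hid : p * dag n p = q * dag n q)
    (hcop : IsCoprime p q)
    (hone : ‖p.eval 1 / q.eval 1‖ = 1)
    (hqroots : ∀ b ∈ q.roots, 1 < ‖b‖) :
    ∃ (l : ℂ) (a : Fin n → ℂ), ‖l‖ = 1 ∧ (∀ i, ‖a i‖ < 1) ∧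
      ∀ z : ℂ, ‖z‖ ≤ 1 → q.eval z ≠ 0 ∧
        p.eval z / q.eval z = l * ∏ i, (z - a i) / (1 - (starRingEnd ℂ) (a i) * z) := by
  have hpn : p.natDegree ≤ n := hn ▸ le_max_left _ _
  have hqn : q.natDegree ≤ n := hn ▸ le_max_right _ _
  have hq0 : (0:ℂ) ∉ q.roots := by
    intro h
    have := hqroots 0 h
    norm_num at this
  have hdagq : (dag n q).natDegree = n := dag_natDegree_eq hq hqn hq0
  have hdeg : p.natDegree + (dag n p).natDegree = q.natDegree + n := by
    have h := congrArg natDegree hid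
    rwa [natDegree_mul hp (dag_ne_zero hp), natDegree_mul hq (dag_ne_zero hq), hdagq] at h
  have hdagple : (dag n p).natDegree ≤ n := dag_natDegree_le hp hpn
  have hqp : q.natDegree ≤ p.natDegree := by omega
  have hpn' : p.natDegree = n := by rw [hn, max_eq_left hqp]
  have hdagp : (dag n p).natDegree = q.natDegree := by omega
  have hdvd : q ∣ dag n p := by
    have h1 : q ∣ p * dag n p := ⟨dag n q, hid⟩
    exact (hcop.symm).dvd_of_dvd_mul_left h1
  obtain ⟨u, hu⟩ := hdvd
  have hu0 : u ≠ 0 := by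
    intro h0
    exact dag_ne_zero hp (by rw [hu, h0, mul_zero])
  have hudeg : u.natDegree = 0 := by
    have h := congrArg natDegree hu
    rw [natDegree_mul hq hu0, hdagp] at h
    omega
  set c := u.coeff 0 with hcdef
  have hc : u = Polynomial.C c := eq_C_of_natDegree_eq_zero hudeg
  have hc0 : c ≠ 0 := by
    intro h0
    exact hu0 (by rw [hc, h0, map_zero])
  set k := p.leadingCoeff with hkdef
  have hk0 : k ≠ 0 := fun h => hp (leadingCoeff_eq_zero.mp h)
  have hck0 : (starRingEnd ℂ) k ≠ 0 := by simpa using hk0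
  -- all roots of p are in the open unit disk
  have hproots : ∀ b ∈ p.roots, ‖b‖ < 1 := by
    intro b hb
    by_contra hge
    push_neg at hge
    have hb0 : b ≠ 0 := by
      intro h0; rw [h0] at hge; norm_num at hge
    have hcb0 : (starRingEnd ℂ) b ≠ 0 := by simpa using hb0
    set w := ((starRingEnd ℂ) b)⁻¹ with hwdef
    have habsw : ‖w‖ ≤ 1 := by
      rw [hwdef, norm_inv, Complex.norm_conj]
      exact inv_le_one_of_one_le₀ hge
    have hdagw : (dag n p).eval w = 0 := by
      rw [eval_dag]
      have hmem : (0:ℂ) ∈ p.roots.map (fun a => 1 - (starRingEnd ℂ) a * w) := by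
        refine Multiset.mem_map.mpr ⟨b, hb, ?_⟩
        rw [hwdef, mul_inv_cancel₀ hcb0, sub_self]
      rw [Multiset.prod_eq_zero hmem, mul_zero]
    have hqw : q.eval w = 0 := by
      have h := congrArg (Polynomial.eval w) hu
      rw [hdagw, eval_mul, hc, eval_C] at h
      rcases mul_eq_zero.mp h.symm with h' | h'
      · exact h'
      · exact absurd h' hc0
    have : 1 < ‖w‖ := hqroots w (mem_roots'.mpr ⟨hq, hqw⟩)
    linarith
  obtain ⟨a, hamem, haprod⟩ := multiset_to_fin p.roots n (by rw [card_roots_eq, hpn'])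
  set l := c * k / (starRingEnd ℂ) k with hldef
  have key : ∀ z : ℂ, ‖z‖ ≤ 1 → q.eval z ≠ 0 ∧
      p.eval z / q.eval z = l * ∏ i, (z - a i) / (1 - (starRingEnd ℂ) (a i) * z) := by
    intro z hz
    have hqz : q.eval z ≠ 0 := by
      intro h0
      have := hqroots z (mem_roots'.mpr ⟨hq, h0⟩)
      linarith
    have hden : ∀ i, (1 - (starRingEnd ℂ) (a i) * z) ≠ 0 := by
      intro i h0
      have h1 : ‖(starRingEnd ℂ) (a i) * z‖ = 1 := by
        have : (starRingEnd ℂ) (a i) * z = 1 := by linear_combination -h0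
        rw [this]; simp
      rw [norm_mul, Complex.norm_conj] at h1
      have h2 : ‖a i‖ * ‖z‖ < 1 :=
        lt_of_le_of_lt (mul_le_of_le_one_right (norm_nonneg _) hz)
          (hproots _ (hamem i))
      rw [h1] at h2
      exact lt_irrefl _ h2
    have hQ : (∏ i, (1 - (starRingEnd ℂ) (a i) * z)) ≠ 0 :=
      Finset.prod_ne_zero_iff.mpr (fun i _ => hden i)
    have hqform : q.eval z * c = (starRingEnd ℂ) k * ∏ i, (1 - (starRingEnd ℂ) (a i) * z) := by
      have h := congrArg (Polynomial.eval z) hu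
      rw [eval_dag, hc, eval_mul, eval_C, hpn', Nat.sub_self, pow_zero, mul_one] at h
      rw [← haprod (fun b => 1 - (starRingEnd ℂ) b * z), ← h]
    have hpform : p.eval z = k * ∏ i, (z - a i) := by
      rw [eval_factored, haprod (fun b => z - b)]
    refine ⟨hqz, ?_⟩
    rw [hpform, hldef, Finset.prod_div_distrib]
    have hqz' : q.eval z = (starRingEnd ℂ) k * (∏ i, (1 - (starRingEnd ℂ) (a i) * z)) / c := by
      field_simp
      linear_combination hqform
    rw [hqz']
    field_simp
  have habsl : ‖l‖ = 1 := by
    obtain ⟨hq1, hform⟩ := key 1 (by norm_num)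
    rw [hform, norm_mul, norm_prod] at hone
    have hfac : ∀ i, ‖(1 - a i) / (1 - (starRingEnd ℂ) (a i) * 1)‖ = 1 := by
      intro i
      have hne : (1 - a i) ≠ 0 := by
        intro h0
        have h1 : a i = 1 := by linear_combination -h0
        have h2 := hproots _ (hamem i)
        rw [h1] at h2
        norm_num at h2
      rw [mul_one, norm_div]
      have : (1 : ℂ) - (starRingEnd ℂ) (a i) = (starRingEnd ℂ) (1 - a i) := by
        rw [map_sub, map_one]
      rw [this, Complex.norm_conj, div_self (norm_ne_zero_iff.mpr hne)]
    rw [Finset.prod_congr rfl (fun i _ => hfac i), Finset.prod_const_one, mul_one] at hone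
    exact hone
  exact ⟨l, a, habsl, fun i => hproots _ (hamem i), key⟩

lemma coe_mem_circleHat {z : ℂ} : ((z : OnePoint ℂ) ∈ circleHat) ↔ ‖z‖ = 1 := by
  constructor
  · rintro ⟨w, hw, hwz⟩
    have hwz' : w = z := OnePoint.coe_injective hwz
    subst hwz'
    simpa [Complex.dist_eq] using (mem_sphere_iff_norm.mp hw)
  · intro h
    exact ⟨z, by simp [mem_sphere_iff_norm, h], rfl⟩

lemma infty_not_mem_circleHat : (∞ : OnePoint ℂ) ∉ circleHat := by
  rintro ⟨w, _, hw⟩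
  exact OnePoint.coe_ne_infty w hw

lemma coprime_eval_ne {p q : Polynomial ℂ} (h : IsCoprime p q) {z : ℂ}
    (hp : p.eval z = 0) : q.eval z ≠ 0 := by
  obtain ⟨u, v, huv⟩ := h
  intro h0
  have := congrArg (Polynomial.eval z) huv
  simp [hp, h0] at this

lemma not_constant_on_coe {r : OnePoint ℂ → OnePoint ℂ} (hcont : Continuous r)
    (hnc : ¬ ∃ c : OnePoint ℂ, ∀ w, r w = c) (v : OnePoint ℂ) (h : ∀ z : ℂ, r z = v) :
    False := by
  apply hnc
  refine ⟨v, fun w => ?_⟩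
  have heq : r = fun _ => v := by
    apply hcont.ext_on OnePoint.denseRange_coe continuous_const
    rintro _ ⟨z, rfl⟩
    exact h z
  rw [heq]

lemma disk_dichotomy {r : OnePoint ℂ → OnePoint ℂ} {p q : Polynomial ℂ}
    (hcont : Continuous r)
    (hpre : r ⁻¹' circleHat = circleHat)
    (hcop : IsCoprime p q)
    (heval : ∀ z : ℂ, q.eval z ≠ 0 → r z = ((p.eval z / q.eval z : ℂ) : OnePoint ℂ))
    (hinf : ∀ z : ℂ, q.eval z = 0 → r z = ∞) :
    (∀ z : ℂ, ‖z‖ < 1 → q.eval z ≠ 0) ∨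
    (∀ z : ℂ, ‖z‖ < 1 → p.eval z ≠ 0) := by
  set U := r ⁻¹' ((fun z : ℂ => (z : OnePoint ℂ)) '' (ball 0 1)) with hU
  set V := r ⁻¹' (((fun z : ℂ => (z : OnePoint ℂ)) '' (closedBall 0 1))ᶜ) with hV
  have hUopen : IsOpen U :=
    (OnePoint.isOpenMap_coe _ isOpen_ball).preimage hcont
  have hVopen : IsOpen V :=
    (((isCompact_closedBall (0:ℂ) 1).image OnePoint.continuous_coe).isClosed.isOpen_compl).preimage
      hcont
  have hdisj : Disjoint U V := by
    apply Disjoint.preimage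
    exact disjoint_compl_right.mono_left (image_mono ball_subset_closedBall)
  have hcover : (fun z : ℂ => (z : OnePoint ℂ)) '' (ball 0 1) ⊆ U ∪ V := by
    rintro _ ⟨z, hz, rfl⟩
    have hz1 : ‖z‖ < 1 := by
      simpa [Complex.dist_eq] using (mem_ball_zero_iff.mp hz)
    have h1 : (z : OnePoint ℂ) ∉ circleHat := by
      rw [coe_mem_circleHat]
      exact ne_of_lt hz1
    have h2 : r (z : OnePoint ℂ) ∉ circleHat := by
      intro hmem
      exact h1 (hpre ▸ (mem_preimage.mpr hmem))
    rcases hrz : r (z : OnePoint ℂ) with _ | w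
    · right
      refine mem_preimage.mpr ?_
      rw [hrz]
      rintro ⟨w, _, hw⟩
      exact OnePoint.coe_ne_infty w hw
    · have hw1 : ‖w‖ ≠ 1 := by
        intro h1
        apply h2
        rw [hrz]
        exact coe_mem_circleHat.mpr h1
      rcases lt_or_gt_of_ne hw1 with hlt | hgt
      · left
        refine mem_preimage.mpr ?_
        rw [hrz]
        exact ⟨w, by simpa [Complex.dist_eq] using hlt, rfl⟩
      · right
        refine mem_preimage.mpr ?_
        rw [hrz]
        rintro ⟨v, hv, hvw⟩
        have hvw' : v = w := OnePoint.coe_injective hvw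
        subst hvw'
        have : ‖v‖ ≤ 1 := by
          simpa [Complex.dist_eq] using (mem_closedBall_zero_iff.mp hv)
        linarith
  have hconn : IsPreconnected ((fun z : ℂ => (z : OnePoint ℂ)) '' (ball 0 1)) :=
    ((convex_ball (0:ℂ) 1).isPreconnected).image _ (OnePoint.continuous_coe.continuousOn)
  rcases hconn.subset_or_subset hUopen hVopen hdisj hcover with h | h
  · left
    intro z hz h0
    have hmem : (z : OnePoint ℂ) ∈ U :=
      h ⟨z, by simpa [mem_ball_zero_iff, Complex.dist_eq] using hz, rfl⟩
    rw [mem_preimage, hinf z h0] at hmem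
    obtain ⟨w, _, hw⟩ := hmem
    exact OnePoint.coe_ne_infty w hw
  · right
    intro z hz h0
    have hqz : q.eval z ≠ 0 := coprime_eval_ne hcop h0
    have hmem : (z : OnePoint ℂ) ∈ V :=
      h ⟨z, by simpa [mem_ball_zero_iff, Complex.dist_eq] using hz, rfl⟩
    rw [mem_preimage, heval z hqz, h0, zero_div] at hmem
    exact hmem ⟨0, by simp, rfl⟩


/-- a nonconstant rational map `C` with `C(𝕋) ⊆ 𝕋` whose full preimage
of the circle is the circle, `C⁻¹(𝕋) = 𝕋`, is a finite Blaschke product or the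
reciprocal of a finite Blaschke product. -/
theorem qfbp_circle_preimage_eq_circle_blaschke_or_inv
    (C : OnePoint ℂ → OnePoint ℂ) (hC : IsRationalMap C)
    (hnc : ¬ ∃ c : OnePoint ℂ, ∀ w, C w = c)
    (hT : C '' circleHat ⊆ circleHat)
    (hpre : C ⁻¹' circleHat = circleHat) :
    (∃ d, IsBlaschkeHat d C) ∨ (∃ d, IsInvBlaschkeHat d C) := by
  have hcont : Continuous C := hC.1
  obtain ⟨p, q, hcop, hq0, heval, hinf⟩ := ratmap_repr hC
  have hsph : ∀ z : ℂ, ‖z‖ = 1 →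
      q.eval z ≠ 0 ∧ ‖p.eval z / q.eval z‖ = 1 := by
    intro z hz
    have hmem : (z : OnePoint ℂ) ∈ circleHat := coe_mem_circleHat.mpr hz
    have hCz : C (z : OnePoint ℂ) ∈ circleHat := hT ⟨_, hmem, rfl⟩
    have hqz : q.eval z ≠ 0 := by
      intro h0
      rw [hinf z h0] at hCz
      exact infty_not_mem_circleHat hCz
    refine ⟨hqz, ?_⟩
    rw [heval z hqz] at hCz
    exact coe_mem_circleHat.mp hCz
  have hq1 := (hsph 1 (by norm_num)).1
  have habs1 := (hsph 1 (by norm_num)).2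
  have hp1 : p.eval 1 ≠ 0 := by
    intro h0
    rw [h0, zero_div] at habs1
    simp at habs1
  have hp0 : p ≠ 0 := by
    intro h0
    exact hp1 (by rw [h0]; simp)
  set n := max p.natDegree q.natDegree with hn
  have hn1 : 1 ≤ n := by
    rcases Nat.eq_zero_or_pos n with h0 | h1
    · exfalso
      rw [hn] at h0
      have hpd : p.natDegree = 0 := by
        have := Nat.max_eq_zero_iff.mp h0
        exact this.1
      have hqd : q.natDegree = 0 := by
        have := Nat.max_eq_zero_iff.mp h0
        exact this.2
      have hcp := Polynomial.eq_C_of_natDegree_eq_zero hpd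
      have hcq := Polynomial.eq_C_of_natDegree_eq_zero hqd
      apply not_constant_on_coe hcont hnc ((p.coeff 0 / q.coeff 0 : ℂ) : OnePoint ℂ)
      intro z
      have hqz : q.eval z ≠ 0 := by
        rw [hcq, Polynomial.eval_C]
        intro h0'
        exact hq0 (by rw [hcq, h0', map_zero])
      have hval : p.eval z / q.eval z = p.coeff 0 / q.coeff 0 := by
        conv_lhs => rw [hcp, hcq]
        simp
      rw [heval z hqz, hval]
    · exact h1
  have hid : p * dag n p = q * dag n q :=
    dag_identity hp0 hq0 (hn ▸ le_max_left _ _) (hn ▸ le_max_right _ _)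
      (fun z hz => (hsph z hz).2)
  rcases disk_dichotomy hcont hpre hcop heval hinf with hA | hB
  · left
    have hqroots : ∀ b ∈ q.roots, 1 < ‖b‖ := by
      intro b hb
      have hbz : q.eval b = 0 := (Polynomial.mem_roots'.mp hb).2
      rcases lt_trichotomy (‖b‖) 1 with h | h | h
      · exact absurd hbz (hA b h)
      · exact absurd hbz (hsph b h).1
      · exact h
    obtain ⟨l, a, hl, ha, key⟩ := blaschke_side hp0 hq0 hn hid hcop habs1 hqroots
    refine ⟨n, fun z => l * ∏ i, (z - a i) / (1 - (starRingEnd ℂ) (a i) * z),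
      ⟨hn1, l, a, hl, ha, fun z _ => rfl⟩, ?_⟩
    intro z hz
    obtain ⟨hqz, hform⟩ := key z hz
    rw [heval z hqz, hform]
  · right
    have hproots : ∀ b ∈ p.roots, 1 < ‖b‖ := by
      intro b hb
      have hbz : p.eval b = 0 := (Polynomial.mem_roots'.mp hb).2
      rcases lt_trichotomy (‖b‖) 1 with h | h | h
      · exact absurd hbz (hB b h)
      · exfalso
        have h2 := (hsph b h).2
        rw [hbz, zero_div] at h2
        simp at h2
      · exact h
    have habsq1 : ‖q.eval 1‖ = ‖p.eval 1‖ := by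
      rw [norm_div, div_eq_one_iff_eq (by simpa using hq1)] at habs1
      exact habs1.symm
    have hone' : ‖q.eval 1 / p.eval 1‖ = 1 := by
      rw [norm_div, habsq1, div_self (by simpa using hp1)]
    have hn' : n = max q.natDegree p.natDegree := by rw [hn, max_comm]
    obtain ⟨l, a, hl, ha, key⟩ := blaschke_side hq0 hp0 hn' hid.symm hcop.symm hone' hproots
    refine ⟨n, fun z => l * ∏ i, (z - a i) / (1 - (starRingEnd ℂ) (a i) * z),
      ⟨hn1, l, a, hl, ha, fun z _ => rfl⟩, ?_⟩
    intro z hz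
    obtain ⟨hpz, hform⟩ := key z hz
    constructor
    · intro hB0
      have hzero : q.eval z / p.eval z = 0 := by rw [hform]; exact hB0
      rcases div_eq_zero_iff.mp hzero with h' | h'
      · exact hinf z h'
      · exact absurd h' hpz
    · intro hB0
      have hqz : q.eval z ≠ 0 := by
        intro h0
        apply hB0
        show l * ∏ i, (z - a i) / (1 - (starRingEnd ℂ) (a i) * z) = 0
        rw [← hform, h0, zero_div]
      rw [heval z hqz]
      have hiv : (l * ∏ i, (z - a i) / (1 - (starRingEnd ℂ) (a i) * z))⁻¹
          = p.eval z / q.eval z := by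
        rw [← hform, inv_div]
      exact congrArg _ hiv.symm
end

section
/- With ρ_A, ρ_B : G → S_d and the relation ∼ as defined: for every h ∈ G and all j, k ∈ {1, …, d}, if j ∼ k then ρ_A(h)(j) ∼ ρ_A(h)(k) and ρ_B(h)(j) ∼ ρ_B(h)(k). Equivalently, both permutation representations ρ_A and ρ_B respect the partition 𝒫 of {1, …, d} into ∼-equivalence classes: the image of each class under ρ_A(h) or ρ_B(h) is contained in a single class. -/
/-! Monodromy relations `≃` and `∼` for two permutation representations
`ρA, ρB : G → S_d` (modelling the monodromy actions of two degree-`d`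
Blaschke products). -/

/-- The symmetric relation `≃` on `{1, …, d}` (modelled as `Fin d`): `j ≃ k` iff some
`g ∈ G` and index `i` satisfy `ρB g i = j` and `ρA g i = k`, or vice versa. -/
def monSimeq {G : Type*} [Group G] {d : ℕ} (ρA ρB : G →* Equiv.Perm (Fin d))
    (j k : Fin d) : Prop :=
  ∃ (g : G) (i : Fin d), (ρB g i = j ∧ ρA g i = k) ∨ (ρB g i = k ∧ ρA g i = j)

/-- The equivalence relation `∼` generated by `≃`. -/
def monSim {G : Type*} [Group G] {d : ℕ} (ρA ρB : G →* Equiv.Perm (Fin d))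
    (j k : Fin d) : Prop :=
  Relation.EqvGen (monSimeq ρA ρB) j k

/-- for every `h ∈ G` and all `j, k`, if `j ∼ k` then
`ρA h j ∼ ρA h k` and `ρB h j ∼ ρB h k`; i.e. both representations respect the
partition of `{1, …, d}` into `∼`-classes. -/
theorem monSim_respected {G : Type*} [Group G] {d : ℕ}
    (ρA ρB : G →* Equiv.Perm (Fin d)) (h : G) (j k : Fin d)
    (hjk : monSim ρA ρB j k) :
    monSim ρA ρB (ρA h j) (ρA h k) ∧ monSim ρA ρB (ρB h j) (ρB h k) := by
  -- For any x, ρA h x ∼ ρB h x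
  have hAB : ∀ x : Fin d, monSim ρA ρB (ρA h x) (ρB h x) :=
    fun x => Relation.EqvGen.rel _ _ ⟨h, x, Or.inr ⟨rfl, rfl⟩⟩
  -- Main: ρB h j ∼ ρB h k
  have hB : monSim ρA ρB (ρB h j) (ρB h k) := by
    induction hjk with
    | rel x y hxy =>
        rcases hxy with ⟨g, i, ⟨hb, ha⟩ | ⟨hb, ha⟩⟩
        · -- ρB g i = x, ρA g i = y : ρB h x ≃ ρA h y ∼ ρB h y
          have h1 : monSimeq ρA ρB (ρB h x) (ρA h y) := by
            refine ⟨h * g, i, Or.inl ⟨?_, ?_⟩⟩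
            · simp [map_mul, hb]
            · simp [map_mul, ha]
          exact Relation.EqvGen.trans _ _ _ (Relation.EqvGen.rel _ _ h1)
            (hAB y)
        · -- ρB g i = y, ρA g i = x : symmetric
          have h1 : monSimeq ρA ρB (ρB h y) (ρA h x) := by
            refine ⟨h * g, i, Or.inl ⟨?_, ?_⟩⟩
            · simp [map_mul, hb]
            · simp [map_mul, ha]
          exact Relation.EqvGen.symm _ _ (Relation.EqvGen.trans _ _ _
            (Relation.EqvGen.rel _ _ h1) (hAB x))
    | refl x => exact Relation.EqvGen.refl _
    | symm x y _ ih => exact Relation.EqvGen.symm _ _ ih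
    | trans x y z _ _ ih1 ih2 => exact Relation.EqvGen.trans _ _ _ ih1 ih2
  refine ⟨?_, hB⟩
  exact Relation.EqvGen.trans _ _ _ (hAB j)
    (Relation.EqvGen.trans _ _ _ hB (Relation.EqvGen.symm _ _ (hAB k)))
end
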